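/- Let n ≥ 1 and let K = ℚ(X_0,…,X_{n−1},Y_1,…,Y_n) be the rational function field in the 2n indicated variables. For every subset I ⊆ {1,…,n−1}: Σ_{J⊆{1,…,n−1}, J⊇I} W_{n,J}(X_0^{−1},…,X_{n−1}^{−1}, Y_1^{−1},…,Y_n^{−1}) = (−1)^n · Σ_{J⊆{1,…,n−1}, J⊇I^c} W_{n,J}(X,Y), where I^c := {1,…,n−1} \ I. -/

import Mathlib

/-- The rational expression `W_{n,I}(X,Y)` over a field, with `Z̲ := Z/(1-Z)`. -/
noncomputable def Wrat {K : Type*} [Field K] (n : ℕ) (I : Finset ℕ) (X Y : ℕ → K) : K :=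
  (X 0 / (1 - X 0)) * ∏ i ∈ I, X i / (1 - X i)
  + (Y n / (1 - Y n)) * ∏ i ∈ I, Y i / (1 - Y i)
  + ∑ j ∈ I, (∏ i ∈ I.filter (· ≤ j), Y i / (1 - Y i)) *
      ∏ i ∈ I.filter (fun i => j ≤ i), X i / (1 - X i)
  + ∑ j ∈ insert n I, (∏ i ∈ I.filter (· < j), Y i / (1 - Y i)) *
      ∏ i ∈ I.filter (fun i => j ≤ i), X i / (1 - X i)

/-- The rational function field ℚ(X_0,…,X_{n−1},Y_1,…,Y_n) in 2n variables. -/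
abbrev KXY (n : ℕ) := FractionRing (MvPolynomial (Fin n ⊕ Fin n) ℚ)

/-- The variable X_i (0 ≤ i ≤ n−1) of ℚ(X_0,…,X_{n−1},Y_1,…,Y_n); junk value 1 outside range. -/
noncomputable def Xvar (n : ℕ) (i : ℕ) : KXY n :=
  if h : i < n then algebraMap (MvPolynomial (Fin n ⊕ Fin n) ℚ) (KXY n)
    (MvPolynomial.X (Sum.inl ⟨i, h⟩)) else 1

/-- The variable Y_i (1 ≤ i ≤ n) of ℚ(X_0,…,X_{n−1},Y_1,…,Y_n); junk value 1 outside range. -/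
noncomputable def Yvar (n : ℕ) (i : ℕ) : KXY n :=
  if h : 1 ≤ i ∧ i ≤ n then algebraMap (MvPolynomial (Fin n ⊕ Fin n) ℚ) (KXY n)
    (MvPolynomial.X (Sum.inr ⟨i - 1, by omega⟩)) else 1

/-! ### Auxiliary machinery -/

/-- The closed form. -/
noncomputable def CF {K : Type*} [Field K] (n : ℕ) (s : Finset ℕ) (a b c d : ℕ → K) : K :=
  a 0 * ∏ i ∈ s, c i + (1 + b n) * ∏ i ∈ s, d i
  + ∑ j ∈ s, a j * (1 + b j) * (∏ i ∈ s.filter (· < j), d i) *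
      ∏ i ∈ s.filter (fun i => j < i), c i

section Aux

variable {K : Type*} [Field K]

lemma CF_congr (n : ℕ) (s : Finset ℕ) (a b c d c' d' : ℕ → K)
    (hc : ∀ i ∈ s, c' i = c i) (hd : ∀ i ∈ s, d' i = d i) :
    CF n s a b c' d' = CF n s a b c d := by
  unfold CF
  rw [Finset.prod_congr rfl hc, Finset.prod_congr rfl hd]
  congr 1
  refine Finset.sum_congr rfl fun j hj => ?_
  rw [Finset.prod_congr rfl fun i hi => hd i (Finset.mem_of_mem_filter i hi),
    Finset.prod_congr rfl fun i hi => hc i (Finset.mem_of_mem_filter i hi)]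

lemma filter_le_eq (I : Finset ℕ) (j : ℕ) (hj : j ∈ I) :
    I.filter (· ≤ j) = insert j (I.filter (· < j)) := by
  ext i
  simp only [Finset.mem_filter, Finset.mem_insert]
  constructor
  · rintro ⟨hi, h⟩; rcases eq_or_lt_of_le h with h | h
    · exact Or.inl h
    · exact Or.inr ⟨hi, h⟩
  · rintro (rfl | ⟨hi, h⟩)
    · exact ⟨hj, le_rfl⟩
    · exact ⟨hi, h.le⟩

lemma filter_ge_eq (I : Finset ℕ) (j : ℕ) (hj : j ∈ I) :
    I.filter (fun i => j ≤ i) = insert j (I.filter (fun i => j < i)) := by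
  ext i
  simp only [Finset.mem_filter, Finset.mem_insert]
  constructor
  · rintro ⟨hi, h⟩; rcases eq_or_lt_of_le h with h | h
    · exact Or.inl h.symm
    · exact Or.inr ⟨hi, h⟩
  · rintro (rfl | ⟨hi, h⟩)
    · exact ⟨hj, le_rfl⟩
    · exact ⟨hi, h.le⟩

lemma Wrat_eq_CF (n : ℕ) (I : Finset ℕ) (X Y : ℕ → K) (hlt : ∀ i ∈ I, i < n) :
    Wrat n I X Y = CF n I (fun i => X i / (1 - X i)) (fun i => Y i / (1 - Y i))
      (fun i => X i / (1 - X i)) (fun i => Y i / (1 - Y i)) := by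
  have hnI : n ∉ I := fun h => lt_irrefl n (hlt n h)
  have hfn1 : I.filter (· < n) = I := Finset.filter_true_of_mem fun i hi => hlt i hi
  have hfn2 : I.filter (fun i => n ≤ i) = ∅ :=
    Finset.filter_false_of_mem fun i hi => not_le.2 (hlt i hi)
  unfold Wrat CF
  rw [Finset.sum_insert hnI, hfn1, hfn2, Finset.prod_empty, mul_one]
  have h3 : ∀ j ∈ I, (∏ i ∈ I.filter (· ≤ j), Y i / (1 - Y i)) *
      ∏ i ∈ I.filter (fun i => j ≤ i), X i / (1 - X i) =
      (Y j / (1 - Y j) * ∏ i ∈ I.filter (· < j), Y i / (1 - Y i)) *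
      (X j / (1 - X j) * ∏ i ∈ I.filter (fun i => j < i), X i / (1 - X i)) := by
    intro j hj
    have hj1 : j ∉ I.filter (· < j) := fun h => lt_irrefl j (Finset.mem_filter.1 h).2
    have hj2 : j ∉ I.filter (fun i => j < i) := fun h => lt_irrefl j (Finset.mem_filter.1 h).2
    rw [filter_le_eq I j hj, filter_ge_eq I j hj, Finset.prod_insert hj1,
      Finset.prod_insert hj2]
  have h4 : ∀ j ∈ I, (∏ i ∈ I.filter (· < j), Y i / (1 - Y i)) *
      ∏ i ∈ I.filter (fun i => j ≤ i), X i / (1 - X i) =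
      (∏ i ∈ I.filter (· < j), Y i / (1 - Y i)) *
      (X j / (1 - X j) * ∏ i ∈ I.filter (fun i => j < i), X i / (1 - X i)) := by
    intro j hj
    have hj2 : j ∉ I.filter (fun i => j < i) := fun h => lt_irrefl j (Finset.mem_filter.1 h).2
    rw [filter_ge_eq I j hj, Finset.prod_insert hj2]
  rw [Finset.sum_congr rfl h3, Finset.sum_congr rfl h4]
  have h5 : ∑ j ∈ I, (fun i => X i / (1 - X i)) j * (1 + (fun i => Y i / (1 - Y i)) j) *
      (∏ i ∈ I.filter (· < j), Y i / (1 - Y i)) *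
      (∏ i ∈ I.filter (fun i => j < i), X i / (1 - X i)) =
      ∑ j ∈ I, ((Y j / (1 - Y j) * ∏ i ∈ I.filter (· < j), Y i / (1 - Y i)) *
      (X j / (1 - X j) * ∏ i ∈ I.filter (fun i => j < i), X i / (1 - X i)) +
      (∏ i ∈ I.filter (· < j), Y i / (1 - Y i)) *
      (X j / (1 - X j) * ∏ i ∈ I.filter (fun i => j < i), X i / (1 - X i))) := by
    refine Finset.sum_congr rfl fun j _ => ?_
    simp only []
    ring
  rw [h5, Finset.sum_add_distrib]
  ring

lemma CF_insert (n : ℕ) (s : Finset ℕ) (k : ℕ) (hk : k ∉ s) (a b c d : ℕ → K) :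
    CF n (insert k s) a b c d =
      a 0 * (c k * ∏ i ∈ s, c i) + (1 + b n) * (d k * ∏ i ∈ s, d i)
      + a k * (1 + b k) * (∏ i ∈ s.filter (· < k), d i) *
          (∏ i ∈ s.filter (fun i => k < i), c i)
      + ∑ j ∈ s, a j * (1 + b j) * ((if k < j then d k else c k) *
          ((∏ i ∈ s.filter (· < j), d i) * ∏ i ∈ s.filter (fun i => j < i), c i)) := by
  have hkf : ∀ t : Finset ℕ, t ⊆ s → k ∉ t := fun t ht h => hk (ht h)
  unfold CF
  rw [Finset.prod_insert hk, Finset.prod_insert hk, Finset.sum_insert hk,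
    Finset.filter_insert, if_neg (lt_irrefl k), Finset.filter_insert, if_neg (lt_irrefl k)]
  have hs : ∀ j ∈ s, a j * (1 + b j) * (∏ i ∈ (insert k s).filter (· < j), d i) *
      ∏ i ∈ (insert k s).filter (fun i => j < i), c i =
      a j * (1 + b j) * ((if k < j then d k else c k) *
      ((∏ i ∈ s.filter (· < j), d i) * ∏ i ∈ s.filter (fun i => j < i), c i)) := by
    intro j hj
    have hkj : k ≠ j := fun h => hk (h ▸ hj)
    rcases lt_or_gt_of_ne hkj with h | h
    · rw [Finset.filter_insert, if_pos h, Finset.filter_insert, if_neg (asymm h),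
        Finset.prod_insert (hkf _ (Finset.filter_subset _ _)), if_pos h]
      ring
    · rw [Finset.filter_insert, if_neg (asymm h), Finset.filter_insert, if_pos h,
        Finset.prod_insert (hkf _ (Finset.filter_subset _ _)), if_neg (asymm h)]
      ring
  rw [Finset.sum_congr rfl hs]
  ring

lemma CF_step (n : ℕ) (s : Finset ℕ) (k : ℕ) (hk : k ∉ s) (a b c d c' d' : ℕ → K)
    (hck : c k = 1 + c' k) (hdk : d k = 1 + d' k)
    (hc : ∀ i ∈ s, c' i = c i) (hd : ∀ i ∈ s, d' i = d i) :
    CF n (insert k s) a b c d = CF n s a b c d + CF n (insert k s) a b c' d' := by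
  rw [CF_insert n s k hk a b c d, CF_insert n s k hk a b c' d']
  have hpc : ∏ i ∈ s, c' i = ∏ i ∈ s, c i := Finset.prod_congr rfl hc
  have hpd : ∏ i ∈ s, d' i = ∏ i ∈ s, d i := Finset.prod_congr rfl hd
  have hfc : ∀ j : ℕ, ∏ i ∈ s.filter (fun i => j < i), c' i =
      ∏ i ∈ s.filter (fun i => j < i), c i :=
    fun j => Finset.prod_congr rfl fun i hi => hc i (Finset.mem_of_mem_filter i hi)
  have hfd : ∀ j : ℕ, ∏ i ∈ s.filter (· < j), d' i = ∏ i ∈ s.filter (· < j), d i :=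
    fun j => Finset.prod_congr rfl fun i hi => hd i (Finset.mem_of_mem_filter i hi)
  unfold CF
  simp only [hpc, hpd, hfc, hfd]
  have key : ∀ j ∈ s, a j * (1 + b j) * ((if k < j then d k else c k) *
      ((∏ i ∈ s.filter (· < j), d i) * ∏ i ∈ s.filter (fun i => j < i), c i)) =
      a j * (1 + b j) * (∏ i ∈ s.filter (· < j), d i) *
        (∏ i ∈ s.filter (fun i => j < i), c i) +
      a j * (1 + b j) * ((if k < j then d' k else c' k) *
      ((∏ i ∈ s.filter (· < j), d i) * ∏ i ∈ s.filter (fun i => j < i), c i)) := by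
    intro j hj
    split_ifs with h
    · rw [hdk]; ring
    · rw [hck]; ring
  have hsum : ∑ j ∈ s, a j * (1 + b j) * ((if k < j then d k else c k) *
      ((∏ i ∈ s.filter (· < j), d i) * ∏ i ∈ s.filter (fun i => j < i), c i)) =
      (∑ j ∈ s, a j * (1 + b j) * (∏ i ∈ s.filter (· < j), d i) *
        ∏ i ∈ s.filter (fun i => j < i), c i) +
      ∑ j ∈ s, a j * (1 + b j) * ((if k < j then d' k else c' k) *
      ((∏ i ∈ s.filter (· < j), d i) * ∏ i ∈ s.filter (fun i => j < i), c i)) := by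
    rw [← Finset.sum_add_distrib]
    exact Finset.sum_congr rfl key
  rw [hsum, hck, hdk]
  ring

lemma master (n : ℕ) (X Y : ℕ → K) (U : Finset ℕ) :
    ∀ I : Finset ℕ, Disjoint I U → (∀ i ∈ I ∪ U, i < n) →
    ∑ T ∈ U.powerset, Wrat n (I ∪ T) X Y =
      CF n (I ∪ U) (fun i => X i / (1 - X i)) (fun i => Y i / (1 - Y i))
        (fun i => if i ∈ I then X i / (1 - X i) else 1 + X i / (1 - X i))
        (fun i => if i ∈ I then Y i / (1 - Y i) else 1 + Y i / (1 - Y i)) := by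
  induction U using Finset.induction_on with
  | empty =>
    intro I hdis hlt
    rw [Finset.union_empty] at hlt ⊢
    rw [Finset.powerset_empty, Finset.sum_singleton, Finset.union_empty,
      Wrat_eq_CF n I X Y hlt]
    exact (CF_congr n I _ _ _ _ _ _ (fun i hi => by simp [hi]) (fun i hi => by simp [hi])).symm
  | @insert k U hk ih =>
    intro I hdis hlt
    have hkI : k ∉ I := fun h =>
      (Finset.disjoint_left.1 hdis h) (Finset.mem_insert_self k U)
    have hdis' : Disjoint I U := hdis.mono_right (Finset.subset_insert k U)
    have hdis2 : Disjoint (insert k I) U :=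
      Finset.disjoint_insert_left.2 ⟨hk, hdis'⟩
    have hset : insert k I ∪ U = insert k (I ∪ U) := Finset.insert_union k I U
    have hset2 : I ∪ insert k U = insert k (I ∪ U) := Finset.union_insert k I U
    have hks : k ∉ I ∪ U := fun h => by
      rcases Finset.mem_union.1 h with h | h
      · exact hkI h
      · exact hk h
    have hlt1 : ∀ i ∈ I ∪ U, i < n := fun i hi =>
      hlt i (by rw [hset2]; exact Finset.mem_insert_of_mem hi)
    have hlt2 : ∀ i ∈ insert k I ∪ U, i < n := fun i hi => hlt i (by rw [hset2, ← hset]; exact hi)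
    have hcongr : ∀ T ∈ U.powerset, Wrat n (I ∪ insert k T) X Y =
        Wrat n (insert k I ∪ T) X Y := by
      intro T _
      rw [Finset.union_insert, Finset.insert_union]
    rw [Finset.sum_powerset_insert hk, ih I hdis' hlt1, Finset.sum_congr rfl hcongr,
      ih (insert k I) hdis2 hlt2, hset, hset2]
    refine (CF_step n (I ∪ U) k hks _ _ _ _ _ _ ?_ ?_ ?_ ?_).symm
    · simp [hkI]
    · simp [hkI]
    · intro i hi
      have : i ≠ k := fun h => hks (h ▸ hi)
      simp [Finset.mem_insert, this]
    · intro i hi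
      have : i ≠ k := fun h => hks (h ▸ hi)
      simp [Finset.mem_insert, this]

lemma superset_sum (S I : Finset ℕ) (hI : I ⊆ S) (f : Finset ℕ → K) :
    ∑ J ∈ S.powerset.filter (fun J => I ⊆ J), f J = ∑ T ∈ (S \ I).powerset, f (I ∪ T) := by
  refine Finset.sum_nbij' (fun J => J \ I) (fun T => I ∪ T) ?_ ?_ ?_ ?_ ?_
  · intro J hJ
    simp only [Finset.mem_filter, Finset.mem_powerset] at hJ ⊢
    exact Finset.sdiff_subset_sdiff hJ.1 le_rfl
  · intro T hT
    simp only [Finset.mem_filter, Finset.mem_powerset] at hT ⊢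
    exact ⟨Finset.union_subset hI (hT.trans (Finset.sdiff_subset)), Finset.subset_union_left⟩
  · intro J hJ
    simp only [Finset.mem_filter, Finset.mem_powerset] at hJ
    exact Finset.union_sdiff_of_subset hJ.2
  · intro T hT
    simp only [Finset.mem_powerset] at hT
    exact Finset.union_sdiff_cancel_left (Finset.disjoint_sdiff.mono_right hT)
  · intro J hJ
    simp only [Finset.mem_filter, Finset.mem_powerset] at hJ
    rw [Finset.union_sdiff_of_subset hJ.2]

lemma tel (c d : ℕ → K) (s : Finset ℕ) :
    ∑ j ∈ s, (d j - c j) * (∏ i ∈ s.filter (· < j), d i) *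
        (∏ i ∈ s.filter (fun i => j < i), c i) =
      (∏ i ∈ s, d i) - ∏ i ∈ s, c i := by
  induction s using Finset.induction_on_max with
  | empty => simp
  | insert k s hks ih =>
    have hk : k ∉ s := fun h => lt_irrefl k (hks k h)
    rw [Finset.sum_insert hk, Finset.prod_insert hk, Finset.prod_insert hk]
    have h1 : (insert k s).filter (· < k) = s := by
      rw [Finset.filter_insert, if_neg (lt_irrefl k)]
      exact Finset.filter_true_of_mem fun i hi => hks i hi
    have h2 : (insert k s).filter (fun i => k < i) = ∅ := by
      rw [Finset.filter_insert, if_neg (lt_irrefl k)]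
      exact Finset.filter_false_of_mem fun i hi => not_lt.2 (hks i hi).le
    rw [h1, h2, Finset.prod_empty]
    have h3 : ∀ j ∈ s, (d j - c j) * (∏ i ∈ (insert k s).filter (· < j), d i) *
        (∏ i ∈ (insert k s).filter (fun i => j < i), c i) =
        c k * ((d j - c j) * (∏ i ∈ s.filter (· < j), d i) *
        (∏ i ∈ s.filter (fun i => j < i), c i)) := by
      intro j hj
      rw [Finset.filter_insert, if_neg (not_lt.2 (hks j hj).le),
        Finset.filter_insert, if_pos (hks j hj),
        Finset.prod_insert (fun h => hk (Finset.mem_of_mem_filter k h))]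
      ring
    rw [Finset.sum_congr rfl h3, ← Finset.mul_sum, ih]
    ring

lemma CF_inv (n : ℕ) (S : Finset ℕ) (hcard : S.card + 1 = n) (a b a' b' c d c' d' : ℕ → K)
    (h0 : a' 0 = -(1 + a 0)) (hn : b' n = -(1 + b n))
    (ha : ∀ i ∈ S, a' i = -(1 + a i)) (hb : ∀ i ∈ S, b' i = -(1 + b i))
    (hc : ∀ i ∈ S, c' i = -(c i)) (hd : ∀ i ∈ S, d' i = -(d i))
    (hcd : ∀ i ∈ S, d i - c i = b i - a i) :
    CF n S a' b' c' d' = (-1) ^ n * CF n S a b c d := by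
  subst hcard
  have prod_neg' : ∀ (t : Finset ℕ) (f : ℕ → K),
      ∏ i ∈ t, -f i = (-1) ^ t.card * ∏ i ∈ t, f i := by
    intro t f
    calc ∏ i ∈ t, -f i = ∏ i ∈ t, (-1) * f i := by simp [neg_one_mul]
    _ = (∏ _i ∈ t, (-1 : K)) * ∏ i ∈ t, f i := Finset.prod_mul_distrib
    _ = (-1) ^ t.card * ∏ i ∈ t, f i := by rw [Finset.prod_const]
  have hpc : ∏ i ∈ S, c' i = (-1) ^ S.card * ∏ i ∈ S, c i := by
    rw [Finset.prod_congr rfl hc, prod_neg']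
  have hpd : ∏ i ∈ S, d' i = (-1) ^ S.card * ∏ i ∈ S, d i := by
    rw [Finset.prod_congr rfl hd, prod_neg']
  have key : ∀ j ∈ S, a' j * (1 + b' j) * (∏ i ∈ S.filter (· < j), d' i) *
      ∏ i ∈ S.filter (fun i => j < i), c' i =
      (-1) ^ (S.card + 1) * ((1 + a j) * b j * (∏ i ∈ S.filter (· < j), d i) *
      ∏ i ∈ S.filter (fun i => j < i), c i) := by
    intro j hj
    have h1 : ∏ i ∈ S.filter (· < j), d' i =
        (-1) ^ (S.filter (· < j)).card * ∏ i ∈ S.filter (· < j), d i := by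
      rw [Finset.prod_congr rfl fun i hi => hd i (Finset.mem_of_mem_filter i hi), prod_neg']
    have h2 : ∏ i ∈ S.filter (fun i => j < i), c' i =
        (-1) ^ (S.filter (fun i => j < i)).card * ∏ i ∈ S.filter (fun i => j < i), c i := by
      rw [Finset.prod_congr rfl fun i hi => hc i (Finset.mem_of_mem_filter i hi), prod_neg']
    have hdisj : Disjoint (S.filter (· < j)) (S.filter (fun i => j < i)) := by
      rw [Finset.disjoint_left]
      intro x h1' h2'
      exact absurd ((Finset.mem_filter.1 h1').2.trans (Finset.mem_filter.1 h2').2) (lt_irrefl x)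
    have hun : S.filter (· < j) ∪ S.filter (fun i => j < i) = S.erase j := by
      ext i
      simp only [Finset.mem_union, Finset.mem_filter, Finset.mem_erase]
      constructor
      · rintro (⟨h1', h2'⟩ | ⟨h1', h2'⟩)
        · exact ⟨ne_of_lt h2', h1'⟩
        · exact ⟨(ne_of_lt h2').symm, h1'⟩
      · rintro ⟨hne, hiS⟩
        rcases lt_or_gt_of_ne hne with h | h
        · exact Or.inl ⟨hiS, h⟩
        · exact Or.inr ⟨hiS, h⟩
    have hcard0 : 0 < S.card := Finset.card_pos.2 ⟨j, hj⟩
    have hm : (S.filter (· < j)).card + (S.filter (fun i => j < i)).card + 1 = S.card := by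
      have := Finset.card_union_of_disjoint hdisj
      rw [hun, Finset.card_erase_of_mem hj] at this
      omega
    have hsign : (-1 : K) ^ (S.card + 1) =
        (-1) ^ (S.filter (· < j)).card * (-1) ^ (S.filter (fun i => j < i)).card := by
      rw [← pow_add, show S.card + 1 =
        (S.filter (· < j)).card + (S.filter (fun i => j < i)).card + 2 from by omega,
        pow_add]
      norm_num
    rw [ha j hj, hb j hj, h1, h2, hsign]
    ring
  have hsplit : ∑ j ∈ S, (1 + a j) * b j * (∏ i ∈ S.filter (· < j), d i) *
      ∏ i ∈ S.filter (fun i => j < i), c i =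
      (∑ j ∈ S, a j * (1 + b j) * (∏ i ∈ S.filter (· < j), d i) *
      ∏ i ∈ S.filter (fun i => j < i), c i) + ((∏ i ∈ S, d i) - ∏ i ∈ S, c i) := by
    rw [← tel c d S, ← Finset.sum_add_distrib]
    refine Finset.sum_congr rfl fun j hj => ?_
    linear_combination (-((∏ i ∈ S.filter (· < j), d i) *
      ∏ i ∈ S.filter (fun i => j < i), c i)) * hcd j hj
  unfold CF
  rw [h0, hn, hpc, hpd, Finset.sum_congr rfl key, ← Finset.mul_sum, hsplit, pow_succ]
  ring

end Aux

theorem W_superset_sum_inversion (n : ℕ) (hn : 1 ≤ n) (I : Finset ℕ)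
    (hI : I ⊆ Finset.Icc 1 (n - 1)) :
    ∑ J ∈ (Finset.Icc 1 (n - 1)).powerset.filter (fun J => I ⊆ J),
        Wrat n J (fun i => (Xvar n i)⁻¹) (fun i => (Yvar n i)⁻¹) =
      (-1) ^ n *
        ∑ J ∈ (Finset.Icc 1 (n - 1)).powerset.filter (fun J => Finset.Icc 1 (n - 1) \ I ⊆ J),
          Wrat n J (Xvar n) (Yvar n) := by
  classical
  set S := Finset.Icc 1 (n - 1) with hS
  have hcard : S.card + 1 = n := by
    rw [hS, Nat.card_Icc]; omega
  have hltS : ∀ i ∈ S, 1 ≤ i ∧ i < n := by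
    intro i hi
    rw [hS, Finset.mem_Icc] at hi
    omega
  -- nonvanishing of the variables
  have inj : Function.Injective (algebraMap (MvPolynomial (Fin n ⊕ Fin n) ℚ) (KXY n)) :=
    IsFractionRing.injective _ _
  have hvar : ∀ p : Fin n ⊕ Fin n,
      (algebraMap (MvPolynomial (Fin n ⊕ Fin n) ℚ) (KXY n)) (MvPolynomial.X p) ≠ 0 ∧
      (algebraMap (MvPolynomial (Fin n ⊕ Fin n) ℚ) (KXY n)) (MvPolynomial.X p) ≠ 1 := by
    intro p
    constructor
    · intro h
      exact MvPolynomial.X_ne_zero p (inj (by rw [map_zero]; exact h))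
    · intro h
      have h2 : (MvPolynomial.X p : MvPolynomial (Fin n ⊕ Fin n) ℚ) = 1 :=
        inj (by rw [map_one]; exact h)
      have := congrArg MvPolynomial.constantCoeff h2
      simp [MvPolynomial.constantCoeff_X] at this
  have hX : ∀ i, i < n → Xvar n i ≠ 0 ∧ Xvar n i ≠ 1 := by
    intro i hi
    rw [Xvar, dif_pos hi]
    exact hvar _
  have hY : ∀ i, 1 ≤ i → i ≤ n → Yvar n i ≠ 0 ∧ Yvar n i ≠ 1 := by
    intro i h1 h2
    rw [Yvar, dif_pos ⟨h1, h2⟩]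
    exact hvar _
  have binv : ∀ x : KXY n, x ≠ 0 → x ≠ 1 → x⁻¹ / (1 - x⁻¹) = -(1 + x / (1 - x)) := by
    intro x h0 h1
    have h2 : 1 - x ≠ 0 := sub_ne_zero.2 (Ne.symm h1)
    have h3 : 1 - x⁻¹ ≠ 0 := fun h =>
      h1 (inv_eq_one.1 (by linear_combination -h))
    rw [div_eq_iff h3]
    field_simp
    ring
  -- rewrite both sides via `superset_sum` and `master`
  have hIS : I ∪ (S \ I) = S := Finset.union_sdiff_of_subset hI
  have hSI : S \ (S \ I) = I := by
    rw [sdiff_sdiff_right_self]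
    exact inf_eq_right.2 hI
  have hSIS : (S \ I) ∪ I = S := Finset.sdiff_union_of_subset hI
  have hlt1 : ∀ i ∈ I ∪ (S \ I), i < n := by
    intro i hi
    rw [hIS] at hi
    exact (hltS i hi).2
  have hlt2 : ∀ i ∈ (S \ I) ∪ I, i < n := by
    intro i hi
    rw [hSIS] at hi
    exact (hltS i hi).2
  rw [superset_sum S I hI, superset_sum S (S \ I) Finset.sdiff_subset,
    master n _ _ (S \ I) I Finset.disjoint_sdiff hlt1, hIS, hSI,
    master n _ _ I (S \ I) Finset.sdiff_disjoint hlt2, hSIS]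
  -- now conclude with `CF_inv`
  refine CF_inv n S hcard _ _ _ _ _ _ _ _ ?_ ?_ ?_ ?_ ?_ ?_ ?_
  · exact binv _ (hX 0 (by omega)).1 (hX 0 (by omega)).2
  · exact binv _ (hY n (by omega) le_rfl).1 (hY n (by omega) le_rfl).2
  · intro i hi
    exact binv _ (hX i (hltS i hi).2).1 (hX i (hltS i hi).2).2
  · intro i hi
    exact binv _ (hY i (hltS i hi).1 (by have := (hltS i hi).2; omega)).1
      (hY i (hltS i hi).1 (by have := (hltS i hi).2; omega)).2
  · intro i hi
    have hb := binv _ (hX i (hltS i hi).2).1 (hX i (hltS i hi).2).2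
    by_cases hiI : i ∈ I
    · have : i ∉ S \ I := fun h => (Finset.mem_sdiff.1 h).2 hiI
      simp only [hiI, this, if_pos, if_neg, if_true, if_false]
      rw [hb]
    · have : i ∈ S \ I := Finset.mem_sdiff.2 ⟨hi, hiI⟩
      simp only [hiI, this, if_pos, if_neg, if_true, if_false]
      rw [hb]; ring
  · intro i hi
    have h2 : i ≤ n := by have := (hltS i hi).2; omega
    have hb := binv _ (hY i (hltS i hi).1 h2).1 (hY i (hltS i hi).1 h2).2
    by_cases hiI : i ∈ I
    · have : i ∉ S \ I := fun h => (Finset.mem_sdiff.1 h).2 hiI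
      simp only [hiI, this, if_pos, if_neg, if_true, if_false]
      rw [hb]
    · have : i ∈ S \ I := Finset.mem_sdiff.2 ⟨hi, hiI⟩
      simp only [hiI, this, if_pos, if_neg, if_true, if_false]
      rw [hb]; ring
  · intro i hi
    by_cases hiI : i ∈ S \ I <;> simp only [hiI, if_pos, if_neg, if_true, if_false] <;> ring
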